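/- For all 1 ≤ a, b, a', b' ≤ d, all 1 ≤ i, j ≤ ℓ', and all integers k, l ≥ 0, the commutator in End_ℂ(P) satisfies ⁅T_i(a,b;k), T_j(a',b';l)⁆ = δ_{i,j}·( δ_{a',b}·T_i(a,b';k+l) − δ_{a,b'}·T_i(a',b;k+l) ). (This is the bosonic y-variable part of Proposition 4.1 of the paper: the operators T_i(a,b;k) realize on the Fock space the commutation relations of the direct sum of Takiff algebras ⊕_{i=1}^{ℓ'} gl_d[t]/t^{γ_i} gl_d[t], i.e. [e_{ab}⊗t̄^k, e_{a'b'}⊗t̄^l] = δ_{a',b} e_{ab'}⊗t̄^{k+l} − δ_{a,b'} e_{a'b}⊗t̄^{k+l} within each block, with t̄^r = 0 for r ≥ γ_i.) -/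

import Mathlib

open MvPolynomial

/-- Multiplication by the variable `v`, as a `ℂ`-linear endomorphism of the
polynomial ring. -/
noncomputable def mulOp {σ : Type*} (v : σ) :
    Module.End ℂ (MvPolynomial σ ℂ) :=
  LinearMap.mulLeft ℂ (X v)

/-- The partial derivative with respect to the variable `v`, as a `ℂ`-linear endomorphism
of the polynomial ring. -/
noncomputable def derOp {σ : Type*} (v : σ) :
    Module.End ℂ (MvPolynomial σ ℂ) :=
  (pderiv v).toLinearMap

/-- The operator `T_i(a, b; k) = -Σ_{r = l+1}^{l+γ-k} y^b_r ∘ ∂_{y^a_{r+k}}` on the bosonic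
Fock space `MvPolynomial (Fin d × Fin p) ℂ`, where `l = l_i` and `γ = γ_i` (indices of the
`y`-variables are written 0-based, so `r` runs over `l, l+1, …, l+γ-k-1`). -/
noncomputable def Takiff_T (d p : ℕ) (l γ : ℕ) (a b : Fin d) (k : ℕ) :
    Module.End ℂ (MvPolynomial (Fin d × Fin p) ℂ) :=
  - ∑ r ∈ Finset.range (γ - k),
      if h : l + r + k < p then
        mulOp (b, (⟨l + r, by omega⟩ : Fin p)) * derOp (a, (⟨l + r + k, h⟩ : Fin p))
      else 0

lemma pderiv_comm' {σ R : Type*} [CommSemiring R] (i j : σ) (f : MvPolynomial σ R) :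
    pderiv i (pderiv j f) = pderiv j (pderiv i f) := by
  classical
  induction f using MvPolynomial.induction_on with
  | C a => simp
  | add p q hp hq => simp [hp, hq]
  | mul_X q s hq =>
      simp [pderiv_mul, hq, Pi.single_apply, apply_ite (pderiv i), apply_ite (pderiv j)]; ring

lemma mulOp_comm {σ : Type*} (v w : σ) : mulOp v * mulOp w = mulOp (σ := σ) w * mulOp v := by
  apply LinearMap.ext; intro f
  simp [mulOp, Module.End.mul_apply, LinearMap.mulLeft_apply]
  ring

lemma derOp_comm {σ : Type*} (v w : σ) : derOp v * derOp w = derOp (σ := σ) w * derOp v := by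
  apply LinearMap.ext; intro f
  exact pderiv_comm' (R := ℂ) v w f

lemma derOp_mulOp {σ : Type*} [DecidableEq σ] (w v : σ) :
    derOp w * mulOp v = mulOp (σ := σ) v * derOp w + if w = v then 1 else 0 := by
  apply LinearMap.ext; intro f
  by_cases h : w = v <;>
    simp [derOp, mulOp, Module.End.mul_apply, LinearMap.mulLeft_apply, pderiv_mul, h,
      Module.End.one_apply, mul_comm, add_comm]

noncomputable def Eop {σ : Type*} (v w : σ) : Module.End ℂ (MvPolynomial σ ℂ) :=
  mulOp v * derOp w

lemma comm_E {σ : Type*} [DecidableEq σ] (v w v' w' : σ) :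
    Eop v w * Eop v' w' - Eop v' w' * Eop v w
      = (if w = v' then Eop v w' else 0) - (if w' = v then Eop v' w else 0) := by
  have h1 : Eop v w * Eop v' w'
      = mulOp v * mulOp v' * (derOp w * derOp w') + (if w = v' then Eop v w' else 0) := by
    calc Eop v w * Eop v' w' = mulOp v * (derOp w * mulOp v') * derOp w' := by
          simp [Eop, mul_assoc]
      _ = _ := by
          rw [derOp_mulOp]
          split_ifs <;> simp [Eop, mul_add, add_mul, mul_assoc]
  have h2 : Eop v' w' * Eop v w
      = mulOp v * mulOp v' * (derOp w * derOp w') + (if w' = v then Eop v' w else 0) := by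
    calc Eop v' w' * Eop v w = mulOp v' * (derOp w' * mulOp v) * derOp w := by
          simp [Eop, mul_assoc]
      _ = _ := by
          rw [derOp_mulOp]
          rw [mulOp_comm v v', derOp_comm w w']
          split_ifs <;> simp [Eop, mul_add, add_mul, mul_assoc]
  rw [h1, h2]
  abel

/-- index into `Fin p` via mod -/
def idx (p : ℕ) (hp : 0 < p) (x : ℕ) : Fin p := ⟨x % p, Nat.mod_lt _ hp⟩

lemma idx_eq (p : ℕ) (hp : 0 < p) (x : ℕ) (hx : x < p) (h : Fin p) (hh : (h : ℕ) = x) :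
    h = idx p hp x := by
  apply Fin.ext
  simp [idx, Nat.mod_eq_of_lt hx, hh]

lemma Takiff_T_eq (d p L G : ℕ) (hp : 0 < p) (hLG : L + G ≤ p) (a b : Fin d) (k : ℕ) :
    Takiff_T d p L G a b k
      = - ∑ r ∈ Finset.range (G - k),
          Eop ((b, idx p hp (L + r)) : Fin d × Fin p) (a, idx p hp (L + r + k)) := by
  unfold Takiff_T
  congr 1
  refine Finset.sum_congr rfl fun r hr => ?_
  rw [Finset.mem_range] at hr
  have h : L + r + k < p := by omega
  rw [dif_pos h]
  unfold Eop
  rw [idx_eq p hp (L+r) (by omega) ⟨L+r, by omega⟩ rfl,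
      idx_eq p hp (L+r+k) h ⟨L+r+k, h⟩ rfl]

lemma neg_sum_comm {A : Type*} [Ring A] (s t : Finset ℕ) (F G : ℕ → A) :
    (-∑ r ∈ s, F r) * (-∑ x ∈ t, G x) - (-∑ x ∈ t, G x) * (-∑ r ∈ s, F r)
      = ∑ r ∈ s, ∑ x ∈ t, (F r * G x - G x * F r) := by
  rw [neg_mul_neg, neg_mul_neg, Finset.sum_mul_sum, Finset.sum_mul_sum]
  rw [show (∑ x ∈ t, ∑ r ∈ s, G x * F r) = ∑ r ∈ s, ∑ x ∈ t, G x * F r from Finset.sum_comm]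
  rw [← Finset.sum_sub_distrib]
  exact Finset.sum_congr rfl fun r _ => (Finset.sum_sub_distrib _ _).symm

lemma sum1 (d p L G : ℕ) (hp : 0 < p) (hLG : L + G ≤ p) (a b a' b' : Fin d) (k m : ℕ) :
    (∑ r ∈ Finset.range (G - k), ∑ s ∈ Finset.range (G - m),
      (if ((a, idx p hp (L + r + k)) : Fin d × Fin p) = (b', idx p hp (L + s)) then
        Eop ((b, idx p hp (L + r)) : Fin d × Fin p) (a', idx p hp (L + s + m)) else 0))
    = if a = b' then - Takiff_T d p L G a' b (k + m) else 0 := by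
  by_cases hab : a = b'
  · subst hab
    rw [if_pos rfl, Takiff_T_eq d p L G hp hLG, neg_neg]
    have step1 : ∀ r ∈ Finset.range (G - k), ∀ s ∈ Finset.range (G - m),
        (if ((a, idx p hp (L + r + k)) : Fin d × Fin p) = (a, idx p hp (L + s)) then
          Eop ((b, idx p hp (L + r)) : Fin d × Fin p) (a', idx p hp (L + s + m)) else 0)
        = (if s = r + k then
            Eop ((b, idx p hp (L + r)) : Fin d × Fin p) (a', idx p hp (L + s + m)) else 0) := by
      intro r hr s hs
      rw [Finset.mem_range] at hr hs
      refine if_congr ?_ rfl rfl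
      constructor
      · intro h
        have hv := congrArg (fun z : Fin d × Fin p => (z.2 : ℕ)) h
        simp only [idx] at hv
        rw [Nat.mod_eq_of_lt (by omega), Nat.mod_eq_of_lt (by omega)] at hv
        omega
      · intro h
        subst h
        exact congrArg (fun x => ((a, idx p hp x) : Fin d × Fin p)) (by omega)
    rw [Finset.sum_congr rfl fun r hr => Finset.sum_congr rfl fun s hs => step1 r hr s hs]
    have step2 : ∀ r ∈ Finset.range (G - k),
        (∑ s ∈ Finset.range (G - m),
          if s = r + k then
            Eop ((b, idx p hp (L + r)) : Fin d × Fin p) (a', idx p hp (L + s + m)) else 0)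
        = (if r + k ∈ Finset.range (G - m) then
            Eop ((b, idx p hp (L + r)) : Fin d × Fin p) (a', idx p hp (L + (r + k) + m)) else 0) := by
      intro r _
      exact Finset.sum_ite_eq' (Finset.range (G - m)) (r + k)
        (fun s => Eop ((b, idx p hp (L + r)) : Fin d × Fin p) (a', idx p hp (L + s + m)))
    rw [Finset.sum_congr rfl step2]
    rw [← Finset.sum_filter]
    have hfil : (Finset.range (G - k)).filter (fun r => r + k ∈ Finset.range (G - m))
        = Finset.range (G - (k + m)) := by
      ext r
      simp only [Finset.mem_filter, Finset.mem_range]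
      omega
    rw [hfil]
    refine Finset.sum_congr rfl fun r _ => ?_
    exact congrArg (fun x => Eop ((b, idx p hp (L + r)) : Fin d × Fin p) (a', idx p hp x))
      (by omega)
  · rw [if_neg hab]
    refine Finset.sum_eq_zero fun r _ => Finset.sum_eq_zero fun s _ => ?_
    rw [if_neg]
    intro h
    exact hab (congrArg Prod.fst h)

lemma block_zero (d p L G L' G' : ℕ) (hp : 0 < p) (h1 : L + G ≤ p) (h2 : L' + G' ≤ p)
    (hsep : L + G ≤ L' ∨ L' + G' ≤ L) (a b a' b' : Fin d) (k m : ℕ) :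
    Takiff_T d p L G a b k * Takiff_T d p L' G' a' b' m
      - Takiff_T d p L' G' a' b' m * Takiff_T d p L G a b k = 0 := by
  rw [Takiff_T_eq d p L G hp h1, Takiff_T_eq d p L' G' hp h2, neg_sum_comm]
  refine Finset.sum_eq_zero fun r hr => Finset.sum_eq_zero fun s hs => ?_
  rw [Finset.mem_range] at hr hs
  rw [comm_E]
  have hc1 : ¬ ((a, idx p hp (L + r + k)) : Fin d × Fin p) = (b', idx p hp (L' + s)) := by
    intro h
    have hv := congrArg (fun z : Fin d × Fin p => (z.2 : ℕ)) h
    simp only [idx] at hv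
    rw [Nat.mod_eq_of_lt (by omega), Nat.mod_eq_of_lt (by omega)] at hv
    omega
  have hc2 : ¬ ((a', idx p hp (L' + s + m)) : Fin d × Fin p) = (b, idx p hp (L + r)) := by
    intro h
    have hv := congrArg (fun z : Fin d × Fin p => (z.2 : ℕ)) h
    simp only [idx] at hv
    rw [Nat.mod_eq_of_lt (by omega), Nat.mod_eq_of_lt (by omega)] at hv
    omega
  rw [if_neg hc1, if_neg hc2, sub_zero]

lemma block_comm (d p L G : ℕ) (hp : 0 < p) (hLG : L + G ≤ p) (a b a' b' : Fin d) (k m : ℕ) :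
    Takiff_T d p L G a b k * Takiff_T d p L G a' b' m
      - Takiff_T d p L G a' b' m * Takiff_T d p L G a b k
    = (if a' = b then Takiff_T d p L G a b' (k + m) else 0)
      - (if a = b' then Takiff_T d p L G a' b (k + m) else 0) := by
  classical
  rw [Takiff_T_eq d p L G hp hLG a b k, Takiff_T_eq d p L G hp hLG a' b' m, neg_sum_comm]
  have step : ∀ r ∈ Finset.range (G - k), ∀ s ∈ Finset.range (G - m),
      (Eop ((b, idx p hp (L + r)) : Fin d × Fin p) (a, idx p hp (L + r + k))
          * Eop ((b', idx p hp (L + s)) : Fin d × Fin p) (a', idx p hp (L + s + m))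
        - Eop ((b', idx p hp (L + s)) : Fin d × Fin p) (a', idx p hp (L + s + m))
          * Eop ((b, idx p hp (L + r)) : Fin d × Fin p) (a, idx p hp (L + r + k)))
      = (if ((a, idx p hp (L + r + k)) : Fin d × Fin p) = (b', idx p hp (L + s)) then
            Eop ((b, idx p hp (L + r)) : Fin d × Fin p) (a', idx p hp (L + s + m)) else 0)
        - (if ((a', idx p hp (L + s + m)) : Fin d × Fin p) = (b, idx p hp (L + r)) then
            Eop ((b', idx p hp (L + s)) : Fin d × Fin p) (a, idx p hp (L + r + k)) else 0) := by
    intro r _ s _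
    exact comm_E _ _ _ _
  rw [Finset.sum_congr rfl fun r hr => Finset.sum_congr rfl fun s hs => step r hr s hs]
  have split : (∑ r ∈ Finset.range (G - k), ∑ s ∈ Finset.range (G - m),
      ((if ((a, idx p hp (L + r + k)) : Fin d × Fin p) = (b', idx p hp (L + s)) then
            Eop ((b, idx p hp (L + r)) : Fin d × Fin p) (a', idx p hp (L + s + m)) else 0)
        - (if ((a', idx p hp (L + s + m)) : Fin d × Fin p) = (b, idx p hp (L + r)) then
            Eop ((b', idx p hp (L + s)) : Fin d × Fin p) (a, idx p hp (L + r + k)) else 0)))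
    = (∑ r ∈ Finset.range (G - k), ∑ s ∈ Finset.range (G - m),
        (if ((a, idx p hp (L + r + k)) : Fin d × Fin p) = (b', idx p hp (L + s)) then
            Eop ((b, idx p hp (L + r)) : Fin d × Fin p) (a', idx p hp (L + s + m)) else 0))
      - (∑ r ∈ Finset.range (G - k), ∑ s ∈ Finset.range (G - m),
        (if ((a', idx p hp (L + s + m)) : Fin d × Fin p) = (b, idx p hp (L + r)) then
            Eop ((b', idx p hp (L + s)) : Fin d × Fin p) (a, idx p hp (L + r + k)) else 0)) := by
    simp [Finset.sum_sub_distrib]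
  rw [split, sum1 d p L G hp hLG a b a' b' k m]
  rw [show (∑ r ∈ Finset.range (G - k), ∑ s ∈ Finset.range (G - m),
        (if ((a', idx p hp (L + s + m)) : Fin d × Fin p) = (b, idx p hp (L + r)) then
            Eop ((b', idx p hp (L + s)) : Fin d × Fin p) (a, idx p hp (L + r + k)) else 0))
      = (∑ s ∈ Finset.range (G - m), ∑ r ∈ Finset.range (G - k),
        (if ((a', idx p hp (L + s + m)) : Fin d × Fin p) = (b, idx p hp (L + r)) then
            Eop ((b', idx p hp (L + s)) : Fin d × Fin p) (a, idx p hp (L + r + k)) else 0))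
      from Finset.sum_comm]
  rw [sum1 d p L G hp hLG a' b' a b m k, Nat.add_comm m k]
  split_ifs <;> abel


/-- The operators `T_i(a,b;k)` satisfy the commutation relations of the
direct sum of Takiff algebras `⊕_{i=1}^{ℓ'} gl_d[t]/t^{γ_i} gl_d[t]`:
`⁅T_i(a,b;k), T_j(a',b';l)⁆ = δ_{ij} (δ_{a'b} T_i(a,b';k+l) - δ_{ab'} T_i(a',b;k+l))`. -/
theorem stmt6 (d ℓ' : ℕ) (hd : 1 ≤ d) (hℓ : 1 ≤ ℓ')
    (γ : Fin ℓ' → ℕ) (hγ : ∀ i, 0 < γ i) (p : ℕ) (hp : p = ∑ i, γ i)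
    (l : Fin ℓ' → ℕ)
    (hl : ∀ i, l i = ∑ j ∈ Finset.univ.filter (fun j => j < i), γ j)
    (i j : Fin ℓ') (a b a' b' : Fin d) (k m : ℕ) :
    Takiff_T d p (l i) (γ i) a b k * Takiff_T d p (l j) (γ j) a' b' m
      - Takiff_T d p (l j) (γ j) a' b' m * Takiff_T d p (l i) (γ i) a b k
    = if i = j then
        (if a' = b then Takiff_T d p (l i) (γ i) a b' (k + m) else 0)
          - (if a = b' then Takiff_T d p (l i) (γ i) a' b (k + m) else 0)
      else 0 := by
  have hle : ∀ t, l t + γ t ≤ p := by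
    intro t
    have hins : (t : Fin ℓ') ∉ Finset.univ.filter (fun j => j < t) := by simp
    rw [hl t, hp]
    calc (∑ j ∈ Finset.univ.filter (fun j => j < t), γ j) + γ t
        = ∑ j ∈ insert t (Finset.univ.filter (fun j => j < t)), γ j := by
          rw [Finset.sum_insert hins]; ring
      _ ≤ ∑ j, γ j := Finset.sum_le_sum_of_subset (Finset.subset_univ _)
  have hp0 : 0 < p := lt_of_lt_of_le (hγ i) (le_trans (Nat.le_add_left _ _) (hle i))
  have hmono : ∀ s t : Fin ℓ', s < t → l s + γ s ≤ l t := by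
    intro s t hst
    rw [hl s, hl t]
    have hins : (s : Fin ℓ') ∉ Finset.univ.filter (fun j => j < s) := by simp
    have hsub : insert s (Finset.univ.filter (fun j => j < s))
        ⊆ Finset.univ.filter (fun j => j < t) := by
      intro x hx
      simp only [Finset.mem_insert, Finset.mem_filter, Finset.mem_univ, true_and] at hx ⊢
      rcases hx with h | h
      · exact h ▸ hst
      · exact lt_trans h hst
    calc (∑ j ∈ Finset.univ.filter (fun j => j < s), γ j) + γ s
        = ∑ j ∈ insert s (Finset.univ.filter (fun j => j < s)), γ j := by
          rw [Finset.sum_insert hins]; ring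
      _ ≤ ∑ j ∈ Finset.univ.filter (fun j => j < t), γ j :=
          Finset.sum_le_sum_of_subset hsub
  by_cases hij : i = j
  · subst hij
    rw [if_pos rfl]
    exact block_comm d p (l i) (γ i) hp0 (hle i) a b a' b' k m
  · rw [if_neg hij]
    have hsep : l i + γ i ≤ l j ∨ l j + γ j ≤ l i := by
      rcases Ne.lt_or_gt hij with h | h
      · exact Or.inl (hmono i j h)
      · exact Or.inr (hmono j i h)
    exact block_zero d p (l i) (γ i) (l j) (γ j) hp0 (hle i) (hle j) hsep a b a' b' k m
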